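/- There does not exist a 3-obtuse geodesic simplex in hyperbolic 3-space: no nondegenerate geodesic 3-simplex with nonideal vertices has a face F such that each of the three edges of F subtends a nonacute dihedral angle. -/

import Mathlib

open Real
noncomputable section

/-! We work in the Klein (projective) model of hyperbolic 3-space: points are the points
of the open unit ball of `ℝ³`, geodesics are Euclidean segments, so geodesic simplices are
Euclidean simplices.  Dihedral angles are computed in the hyperboloid model via the
Minkowski bilinear form on `ℝ⁴`, using outward spacelike normals of the faces. -/

/-- The Minkowski bilinear form of signature `(-,+,+,+)` on `ℝ⁴`. -/
def mink (x y : Fin 4 → ℝ) : ℝ := -(x 0 * y 0) + x 1 * y 1 + x 2 * y 2 + x 3 * y 3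

/-- The (projective) lift of a point of the Klein ball to `ℝ⁴`. -/
def kleinLift (p : EuclideanSpace ℝ (Fin 3)) : Fin 4 → ℝ := ![1, p 0, p 1, p 2]

/-- A geodesic 3-simplex in hyperbolic 3-space with nonideal vertices, in the Klein model:
the convex hull of `4` affinely independent points of the open unit ball ("nondegenerate"
means not contained in a plane, i.e. affinely independent vertices). -/
structure GeodesicSimplex3 where
  v : Fin 4 → EuclideanSpace ℝ (Fin 3)
  mem_ball : ∀ i, ‖v i‖ < 1
  indep : AffineIndependent ℝ v

/-- An outward spacelike Minkowski normal of the face of `Δ` opposite to the vertex `k`: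
Minkowski-orthogonal to the lifts of the other three vertices, negative on the lift of the
omitted vertex `k`, and spacelike.  (It is unique up to a positive scalar; we choose one.) -/
def outwardNormal (Δ : GeodesicSimplex3) (k : Fin 4) : Fin 4 → ℝ :=
  Classical.epsilon fun nv =>
    (∀ a, a ≠ k → mink nv (kleinLift (Δ.v a)) = 0) ∧
      mink nv (kleinLift (Δ.v k)) < 0 ∧ 0 < mink nv nv

/-- The dihedral angle of `Δ` between the faces opposite to the vertices `k` and `l`,
i.e. the dihedral angle at the edge joining the remaining two vertices, computed by the
standard formula `cos α = -⟨n_k, n_l⟩/√(⟨n_k,n_k⟩⟨n_l,n_l⟩)` for outward normals. -/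
def dihedralAngleFaces (Δ : GeodesicSimplex3) (k l : Fin 4) : ℝ :=
  arccos (-(mink (outwardNormal Δ k) (outwardNormal Δ l)) /
    sqrt (mink (outwardNormal Δ k) (outwardNormal Δ k) *
      mink (outwardNormal Δ l) (outwardNormal Δ l)))

/-- The edge of `Δ` joining the vertices `i ≠ j` subtends a nonacute (`≥ π/2`) dihedral
angle: the dihedral angle between the two faces containing this edge — the faces opposite
to the two remaining vertices `k`, `l` — is at least `π/2`. -/
def SubtendsNonacute (Δ : GeodesicSimplex3) (i j : Fin 4) : Prop :=
  ∃ k l : Fin 4, ({i, j, k, l} : Finset (Fin 4)) = Finset.univ ∧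
    π / 2 ≤ dihedralAngleFaces Δ k l

end

/-! ### Auxiliary lemmas for the proof -/

noncomputable section
open Real

lemma mink_comm (x y : Fin 4 → ℝ) : mink x y = mink y x := by unfold mink; ring

/-- `mink` as a linear map in the first argument. -/
def minkFst (y : Fin 4 → ℝ) : (Fin 4 → ℝ) →ₗ[ℝ] ℝ where
  toFun x := mink x y
  map_add' a b := by simp [mink]; ring
  map_smul' c a := by simp [mink]; ring

/-- `mink` as a linear map in the second argument. -/
def minkSnd (x : Fin 4 → ℝ) : (Fin 4 → ℝ) →ₗ[ℝ] ℝ where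
  toFun y := mink x y
  map_add' a b := by simp [mink]; ring
  map_smul' c a := by simp [mink]; ring

/-- The Minkowski product of the lifts of two points of the open unit ball is negative. -/
lemma mink_lift_lift {p q : EuclideanSpace ℝ (Fin 3)} (hp : ‖p‖ < 1) (hq : ‖q‖ < 1) :
    mink (kleinLift p) (kleinLift q) < 0 := by
  have hsp : p 0 ^ 2 + p 1 ^ 2 + p 2 ^ 2 < 1 := by
    have h1 : ‖p‖ ^ 2 < 1 := by nlinarith [norm_nonneg p]
    rw [EuclideanSpace.norm_eq, Real.sq_sqrt (by positivity)] at h1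
    simpa [Fin.sum_univ_three, Real.norm_eq_abs, sq_abs] using h1
  have hsq : q 0 ^ 2 + q 1 ^ 2 + q 2 ^ 2 < 1 := by
    have h1 : ‖q‖ ^ 2 < 1 := by nlinarith [norm_nonneg q]
    rw [EuclideanSpace.norm_eq, Real.sq_sqrt (by positivity)] at h1
    simpa [Fin.sum_univ_three, Real.norm_eq_abs, sq_abs] using h1
  have : mink (kleinLift p) (kleinLift q) = -1 + (p 0 * q 0 + p 1 * q 1 + p 2 * q 2) := by
    simp [mink, kleinLift]; ring
  rw [this]
  nlinarith [sq_nonneg (p 0 * q 1 - p 1 * q 0), sq_nonneg (p 0 * q 2 - p 2 * q 0),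
    sq_nonneg (p 1 * q 2 - p 2 * q 1),
    sq_nonneg (p 0 * q 0 + p 1 * q 1 + p 2 * q 2 - 1),
    sq_nonneg (p 0 * q 0 + p 1 * q 1 + p 2 * q 2 + 1)]

/-- A nonzero vector Minkowski-orthogonal to a timelike vector is spacelike. -/
lemma spacelike {x t : Fin 4 → ℝ} (ht : mink t t < 0) (hxt : mink x t = 0) (hx : x ≠ 0) :
    0 < mink x x := by
  unfold mink at *
  have hT : 0 < t 0 ^ 2 - (t 1 ^ 2 + t 2 ^ 2 + t 3 ^ 2) := by nlinarith
  by_cases h : x 1 = 0 ∧ x 2 = 0 ∧ x 3 = 0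
  · obtain ⟨h1, h2, h3⟩ := h
    have ht0 : t 0 ≠ 0 := by
      intro h0; rw [h0] at hT
      nlinarith [sq_nonneg (t 1), sq_nonneg (t 2), sq_nonneg (t 3)]
    have hx0 : x 0 = 0 := by
      have : x 0 * t 0 = 0 := by
        rw [h1, h2, h3] at hxt; ring_nf at hxt ⊢; linarith
      rcases mul_eq_zero.mp this with h | h
      · exact h
      · exact absurd h ht0
    exact absurd (funext fun i => by fin_cases i <;> simp [h1, h2, h3, hx0]) hx
  · have hpos : 0 < x 1 ^ 2 + x 2 ^ 2 + x 3 ^ 2 := by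
      have h' : x 1 ≠ 0 ∨ x 2 ≠ 0 ∨ x 3 ≠ 0 := by tauto
      rcases h' with h' | h' | h' <;>
        nlinarith [sq_nonneg (x 1), sq_nonneg (x 2), sq_nonneg (x 3), sq_pos_of_ne_zero h']
    have hx0t : x 0 * t 0 = x 1 * t 1 + x 2 * t 2 + x 3 * t 3 := by linarith
    have hsq : (x 0 * t 0) ^ 2 = (x 1 * t 1 + x 2 * t 2 + x 3 * t 3) ^ 2 := by rw [hx0t]
    nlinarith [sq_nonneg (x 1 * t 2 - x 2 * t 1), sq_nonneg (x 1 * t 3 - x 3 * t 1),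
      sq_nonneg (x 2 * t 3 - x 3 * t 2), mul_pos hpos hT, hsq, sq_nonneg (t 0)]

/-- Every linear functional on `ℝ⁴` is represented by a vector via `mink`. -/
lemma exists_mink_rep (f : (Fin 4 → ℝ) →ₗ[ℝ] ℝ) : ∃ n : Fin 4 → ℝ, ∀ y, mink n y = f y := by
  refine ⟨![-(f (Pi.single 0 1)), f (Pi.single 1 1), f (Pi.single 2 1), f (Pi.single 3 1)],
    fun y => ?_⟩
  have hy : y = y 0 • (Pi.single 0 1 : Fin 4 → ℝ) + y 1 • (Pi.single 1 1 : Fin 4 → ℝ)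
      + y 2 • (Pi.single 2 1 : Fin 4 → ℝ) + y 3 • (Pi.single 3 1 : Fin 4 → ℝ) := by
    funext i; fin_cases i <;> simp [Pi.single_apply]
  conv_rhs => rw [hy]
  simp [mink, map_add, map_smul]
  ring

/-- `mink` is nondegenerate. -/
lemma mink_zero_of_forall {w : Fin 4 → ℝ} (h : ∀ y, mink w y = 0) : w = 0 := by
  funext i
  fin_cases i
  · have := h (Pi.single 0 1); simp [mink, Pi.single_apply] at this; simpa using this
  · have := h (Pi.single 1 1); simp [mink, Pi.single_apply] at this; simpa using this
  · have := h (Pi.single 2 1); simp [mink, Pi.single_apply] at this; simpa using this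
  · have := h (Pi.single 3 1); simp [mink, Pi.single_apply] at this; simpa using this

/-- The Klein lifts of the vertices of a geodesic simplex are linearly independent. -/
lemma lifts_li (Δ : GeodesicSimplex3) :
    LinearIndependent ℝ (fun a => kleinLift (Δ.v a)) := by
  rw [Fintype.linearIndependent_iff]
  intro g hg
  have h0 : ∑ a, g a = 0 := by
    have := congrFun hg 0
    simpa [kleinLift, Finset.sum_apply] using this
  apply (affineIndependent_iff_of_fintype ℝ Δ.v).mp Δ.indep g h0
  rw [Finset.weightedVSub_eq_linear_combination _ h0]
  have hcoord : ∀ j : Fin 3, ∑ a, g a * Δ.v a j = 0 := by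
    intro j
    have := congrFun hg j.succ
    fin_cases j <;> simpa [kleinLift, Finset.sum_apply] using this
  ext j
  have := hcoord j
  simpa [Finset.sum_apply] using this

/-- The Klein lifts of the vertices form a basis of `ℝ⁴`. -/
def liftBasis (Δ : GeodesicSimplex3) : Module.Basis (Fin 4) ℝ (Fin 4 → ℝ) :=
  basisOfLinearIndependentOfCardEqFinrank (lifts_li Δ) (by simp)

lemma liftBasis_apply (Δ : GeodesicSimplex3) (a : Fin 4) :
    liftBasis Δ a = kleinLift (Δ.v a) :=
  congrFun (coe_basisOfLinearIndependentOfCardEqFinrank _ _) a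

/-- The defining property of `outwardNormal`: such a normal vector exists, so
`Classical.epsilon` satisfies the specification. -/
lemma outwardNormal_spec (Δ : GeodesicSimplex3) (k : Fin 4) :
    (∀ a, a ≠ k → mink (outwardNormal Δ k) (kleinLift (Δ.v a)) = 0) ∧
      mink (outwardNormal Δ k) (kleinLift (Δ.v k)) < 0 ∧
      0 < mink (outwardNormal Δ k) (outwardNormal Δ k) := by
  unfold outwardNormal
  apply Classical.epsilon_spec
    (p := fun nv => (∀ a, a ≠ k → mink nv (kleinLift (Δ.v a)) = 0) ∧
      mink nv (kleinLift (Δ.v k)) < 0 ∧ 0 < mink nv nv)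
  obtain ⟨n, hn⟩ := exists_mink_rep (-(liftBasis Δ).coord k)
  have hrep : ∀ a, mink n (kleinLift (Δ.v a)) = if a = k then -1 else 0 := by
    intro a
    rw [← liftBasis_apply, hn]
    simp [Module.Basis.coord_apply, Module.Basis.repr_self, Finsupp.single_apply]
    split <;> simp_all
  have horth : ∀ a, a ≠ k → mink n (kleinLift (Δ.v a)) = 0 := by
    intro a ha; rw [hrep a, if_neg ha]
  have hnegk : mink n (kleinLift (Δ.v k)) < 0 := by
    rw [hrep k, if_pos rfl]; norm_num
  refine ⟨n, horth, hnegk, ?_⟩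
  obtain ⟨a, ha⟩ : ∃ a : Fin 4, a ≠ k :=
    ⟨if k = 0 then 1 else 0, by split <;> simp_all [eq_comm]⟩
  refine spacelike (mink_lift_lift (Δ.mem_ball a) (Δ.mem_ball a)) (horth a ha) ?_
  intro h
  rw [h] at hnegk
  simp [mink] at hnegk

lemma exists_two_others : ∀ m a : Fin 4, a ≠ m →
    ∃ i j : Fin 4, i ≠ j ∧ i ≠ m ∧ j ≠ m ∧ i ≠ a ∧ j ≠ a := by decide

lemma dihedral_symm (Δ : GeodesicSimplex3) (k l : Fin 4) :
    dihedralAngleFaces Δ k l = dihedralAngleFaces Δ l k := by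
  unfold dihedralAngleFaces
  rw [mink_comm (outwardNormal Δ k) (outwardNormal Δ l), mul_comm]

/-- A nonacute dihedral angle forces a nonnegative Minkowski product of the
corresponding outward normals. -/
lemma nonneg_of_angle (Δ : GeodesicSimplex3) (k l : Fin 4)
    (h : π / 2 ≤ dihedralAngleFaces Δ k l) :
    0 ≤ mink (outwardNormal Δ k) (outwardNormal Δ l) := by
  have hQ : 0 < Real.sqrt (mink (outwardNormal Δ k) (outwardNormal Δ k) *
      mink (outwardNormal Δ l) (outwardNormal Δ l)) :=
    Real.sqrt_pos.mpr (mul_pos (outwardNormal_spec Δ k).2.2 (outwardNormal_spec Δ l).2.2)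
  unfold dihedralAngleFaces at h
  rw [Real.arccos] at h
  have hX : -(mink (outwardNormal Δ k) (outwardNormal Δ l)) /
      Real.sqrt (mink (outwardNormal Δ k) (outwardNormal Δ k) *
        mink (outwardNormal Δ l) (outwardNormal Δ l)) ≤ 0 :=
    Real.arcsin_nonpos.mp (by linarith)
  by_contra hc
  push_neg at hc
  have : 0 < -(mink (outwardNormal Δ k) (outwardNormal Δ l)) / Real.sqrt
      (mink (outwardNormal Δ k) (outwardNormal Δ k) *
        mink (outwardNormal Δ l) (outwardNormal Δ l)) :=
    div_pos (by linarith) hQ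
  linarith

end

/-- There is no 3-obtuse geodesic simplex in hyperbolic 3-space: no
nondegenerate geodesic 3-simplex with nonideal vertices has a 2-face `F` (the face opposite
some vertex `m`) such that each of the three edges of `F` subtends a nonacute dihedral
angle. -/
theorem no_three_obtuse_simplex (Δ : GeodesicSimplex3) :
    ¬ ∃ m : Fin 4, ∀ i j : Fin 4, i ≠ j → i ≠ m → j ≠ m → SubtendsNonacute Δ i j := by
  rintro ⟨m, H⟩
  have horth : ∀ k a : Fin 4, a ≠ k →
      mink (outwardNormal Δ k) (kleinLift (Δ.v a)) = 0 :=
    fun k a ha => (outwardNormal_spec Δ k).1 a ha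
  have hneg : ∀ k : Fin 4, mink (outwardNormal Δ k) (kleinLift (Δ.v k)) < 0 :=
    fun k => (outwardNormal_spec Δ k).2.1
  have hsp : ∀ k : Fin 4, 0 < mink (outwardNormal Δ k) (outwardNormal Δ k) :=
    fun k => (outwardNormal_spec Δ k).2.2
  -- Step 1: the three edges of the face opposite `m` force `⟨n_m, n_a⟩ ≥ 0` for `a ≠ m`.
  have key : ∀ a : Fin 4, a ≠ m → 0 ≤ mink (outwardNormal Δ m) (outwardNormal Δ a) := by
    intro a ham
    obtain ⟨i, j, hij, him, hjm, hia, hja⟩ :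
        ∃ i j : Fin 4, i ≠ j ∧ i ≠ m ∧ j ≠ m ∧ i ≠ a ∧ j ≠ a :=
      exists_two_others m a ham
    obtain ⟨k, l, hset, hang⟩ := H i j hij him hjm
    have hmem : ∀ x : Fin 4, x = i ∨ x = j ∨ x = k ∨ x = l := by
      intro x
      have : x ∈ ({i, j, k, l} : Finset (Fin 4)) := hset ▸ Finset.mem_univ x
      simpa [Finset.mem_insert] using this
    have hm' : m = k ∨ m = l := by
      rcases hmem m with h | h | h | h
      · exact absurd h.symm him
      · exact absurd h.symm hjm
      · exact Or.inl h
      · exact Or.inr h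
    have ha' : a = k ∨ a = l := by
      rcases hmem a with h | h | h | h
      · exact absurd h.symm hia
      · exact absurd h.symm hja
      · exact Or.inl h
      · exact Or.inr h
    have hangma : π / 2 ≤ dihedralAngleFaces Δ m a := by
      rcases hm' with rfl | rfl
      · rcases ha' with rfl | rfl
        · exact absurd rfl ham
        · exact hang
      · rcases ha' with rfl | rfl
        · rw [dihedral_symm]; exact hang
        · exact absurd rfl ham
    exact nonneg_of_angle Δ m a hangma
  -- Step 2: decompose `n_m` over `{L m} ∪ {n_a : a ≠ m}` and derive a contradiction.
  set L : Fin 4 → (Fin 4 → ℝ) := fun a => kleinLift (Δ.v a) with hLdef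
  have hLL : mink (L m) (L m) < 0 := mink_lift_lift (Δ.mem_ball m) (Δ.mem_ball m)
  set α : ℝ := mink (outwardNormal Δ m) (L m) / mink (L m) (L m) with hαdef
  have hα : 0 < α := div_pos_of_neg_of_neg (hneg m) hLL
  set S : Finset (Fin 4) := Finset.univ.erase m with hSdef
  set c : Fin 4 → ℝ :=
    fun a => -(α * mink (L m) (L a)) / mink (outwardNormal Δ a) (L a) with hcdef
  have hc_neg : ∀ a ∈ S, c a < 0 := by
    intro a haS
    have ham : a ≠ m := (Finset.mem_erase.mp haS).1
    have h1 : mink (L m) (L a) < 0 := mink_lift_lift (Δ.mem_ball m) (Δ.mem_ball a)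
    have h2 : mink (outwardNormal Δ a) (L a) < 0 := hneg a
    have : 0 < -(α * mink (L m) (L a)) := by nlinarith
    exact div_neg_of_pos_of_neg this h2
  set w : Fin 4 → ℝ :=
    outwardNormal Δ m - α • L m - ∑ a ∈ S, c a • outwardNormal Δ a with hwdef
  have expand : ∀ y : Fin 4 → ℝ,
      mink w y = mink (outwardNormal Δ m) y - α * mink (L m) y
        - ∑ a ∈ S, c a * mink (outwardNormal Δ a) y := by
    intro y
    show minkFst y w = _
    rw [hwdef, map_sub, map_sub, map_smul, map_sum]
    simp only [minkFst, LinearMap.coe_mk, AddHom.coe_mk, smul_eq_mul, map_smul]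
  have hwL : ∀ b : Fin 4, mink w (L b) = 0 := by
    intro b
    rw [expand]
    by_cases hbm : b = m
    · subst hbm
      have hsum : ∑ a ∈ S, c a * mink (outwardNormal Δ a) (L b) = 0 := by
        apply Finset.sum_eq_zero
        intro a haS
        have ham : a ≠ b := (Finset.mem_erase.mp haS).1
        rw [horth a b ham.symm, mul_zero]
      rw [hsum]
      have : α * mink (L b) (L b) = mink (outwardNormal Δ b) (L b) := by
        rw [hαdef, div_mul_cancel₀ _ (ne_of_lt hLL)]
      linarith
    · have h1 : mink (outwardNormal Δ m) (L b) = 0 := horth m b hbm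
      have hbS : b ∈ S := Finset.mem_erase.mpr ⟨hbm, Finset.mem_univ b⟩
      have hsum : ∑ a ∈ S, c a * mink (outwardNormal Δ a) (L b)
          = c b * mink (outwardNormal Δ b) (L b) := by
        apply Finset.sum_eq_single_of_mem b hbS
        intro a haS hab
        rw [horth a b hab.symm, mul_zero]
      rw [h1, hsum]
      have h2 : mink (outwardNormal Δ b) (L b) ≠ 0 := ne_of_lt (hneg b)
      have h3 : c b * mink (outwardNormal Δ b) (L b) = -(α * mink (L m) (L b)) := by
        rw [hcdef]
        exact div_mul_cancel₀ _ h2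
      linarith
  have hw0 : w = 0 := by
    have hall : ∀ y, mink w y = 0 := by
      have : minkSnd w = 0 := by
        apply (liftBasis Δ).ext
        intro b
        rw [liftBasis_apply]
        show mink w (kleinLift (Δ.v b)) = 0
        exact hwL b
      intro y
      have := LinearMap.congr_fun this y
      simpa [minkSnd] using this
    exact mink_zero_of_forall hall
  have hdecomp : outwardNormal Δ m
      = α • L m + ∑ a ∈ S, c a • outwardNormal Δ a := by
    have := hw0
    rw [hwdef, sub_sub, sub_eq_zero] at this
    exact this
  -- Final computation: `⟨n_m, n_m⟩ < 0`, contradicting spacelikeness.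
  have expand2 : mink (α • L m + ∑ a ∈ S, c a • outwardNormal Δ a) (outwardNormal Δ m)
      = α * mink (L m) (outwardNormal Δ m)
        + ∑ a ∈ S, c a * mink (outwardNormal Δ a) (outwardNormal Δ m) := by
    show minkFst (outwardNormal Δ m) (α • L m + ∑ a ∈ S, c a • outwardNormal Δ a) = _
    rw [map_add, map_smul, map_sum]
    simp only [minkFst, LinearMap.coe_mk, AddHom.coe_mk, smul_eq_mul, map_smul]
  have hfinal : mink (outwardNormal Δ m) (outwardNormal Δ m)
      = α * mink (L m) (outwardNormal Δ m)
        + ∑ a ∈ S, c a * mink (outwardNormal Δ a) (outwardNormal Δ m) := by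
    nth_rewrite 1 [hdecomp]
    exact expand2
  have h1 : α * mink (L m) (outwardNormal Δ m) < 0 := by
    have : mink (L m) (outwardNormal Δ m) < 0 := by
      rw [mink_comm]; exact hneg m
    exact mul_neg_of_pos_of_neg hα this
  have h2 : ∑ a ∈ S, c a * mink (outwardNormal Δ a) (outwardNormal Δ m) ≤ 0 := by
    apply Finset.sum_nonpos
    intro a haS
    have ham : a ≠ m := (Finset.mem_erase.mp haS).1
    have : 0 ≤ mink (outwardNormal Δ a) (outwardNormal Δ m) := by
      rw [mink_comm]; exact key a ham
    exact mul_nonpos_of_nonpos_of_nonneg (le_of_lt (hc_neg a haS)) this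
  linarith [hsp m, hfinal, h1, h2]
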